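/- In the power automaton of A_d(B), for any subset {i_1,...,i_s} ⊆ {1,...,k}, the shortest path from Q_0 = {q_0^{i_1},...,q_0^{i_s}} to Q_{d^s−1} = {q_{d-1}^{i_1},...,q_{d-1}^{i_s}} has length exactly d^s − 1. -/

import Mathlib

/-- Alphabet of `A_d(B)`: letter `a`, letters `b_i`, and the letters `c_l` of `B`
(indexed by naturals). -/
inductive LB | a | b (i : ℕ) | c (l : ℕ)
deriving DecidableEq

/-- Partial transition function of `A_d(B)` built from an automaton `B` with
states `{1,…,k}` and (partial) transition `γ`; the state `q_j^i` of `A_d(B)` is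
encoded as `(i, j)` with `1 ≤ i ≤ k`, `0 ≤ j ≤ d-1`. -/
def δAB (d k : ℕ) (γ : ℕ → ℕ → Option ℕ) : ℕ × ℕ → LB → Option (ℕ × ℕ) := fun p x =>
  if ¬(1 ≤ p.1 ∧ p.1 ≤ k ∧ p.2 < d) then none else
  match x with
  | LB.a => some (p.1, 0)
  | LB.b l =>
      if ¬(1 ≤ l ∧ l ≤ k) then none
      else if p.1 = l then (if p.2 + 1 < d then some (p.1, p.2 + 1) else none)
      else if l < p.1 then some (p.1, p.2)
      else if p.2 = d - 1 then some (p.1, 0) else none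
  | LB.c l =>
      if p.2 = d - 1 then (γ p.1 l).map (fun j => (j, 0)) else none

/-- Extension of a partial transition function to words. -/
def run {Q A : Type*} (δ : Q → A → Option Q) : Q → List A → Option Q
  | q, [] => some q
  | q, x :: xs => (δ q x).bind (fun q' => run δ q' xs)

/-- One step of the power automaton. -/
def stepSet {Q A : Type*} [DecidableEq Q] (δ : Q → A → Option Q)
    (S : Finset Q) (x : A) : Option (Finset Q) :=
  if ∀ q ∈ S, (δ q x).isSome then some (S.biUnion fun q => (δ q x).toFinset)
  else none

/-- Run of the power automaton on a word. -/
def runSet {Q A : Type*} [DecidableEq Q] (δ : Q → A → Option Q)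
    (S : Finset Q) (w : List A) : Option (Finset Q) :=
  List.foldlM (stepSet δ) S w

section basics
variable {Q A : Type*} [DecidableEq Q] {δ : Q → A → Option Q}

lemma runSet_nil (S : Finset Q) : runSet δ S [] = some S := rfl

lemma runSet_cons (S : Finset Q) (x : A) (xs : List A) :
    runSet δ S (x :: xs) = (stepSet δ S x).bind (fun T => runSet δ T xs) := by
  simp [runSet, List.foldlM_cons]

lemma runSet_append (S : Finset Q) (w1 w2 : List A) :
    runSet δ S (w1 ++ w2) = (runSet δ S w1).bind (fun T => runSet δ T w2) := by
  simp [runSet, List.foldlM_append]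

lemma stepSet_eq_some {S T : Finset Q} {x : A} (h : stepSet δ S x = some T) :
    (∀ q ∈ S, (δ q x).isSome) ∧ T = S.biUnion fun q => (δ q x).toFinset := by
  unfold stepSet at h
  split at h
  · refine ⟨by assumption, ?_⟩
    injection h with h'
    exact h'.symm
  · exact absurd h (by simp)

lemma mem_of_stepSet {S T : Finset Q} {x : A} (h : stepSet δ S x = some T) {q : Q} :
    q ∈ T ↔ ∃ p ∈ S, δ p x = some q := by
  obtain ⟨h1, rfl⟩ := stepSet_eq_some h
  simp [Finset.mem_biUnion, Option.mem_toFinset, eq_comm]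

lemma stepSet_image {S : Finset Q} {x : A} {g : Q → Q}
    (h : ∀ p ∈ S, δ p x = some (g p)) : stepSet δ S x = some (S.image g) := by
  unfold stepSet
  rw [if_pos]
  · congr 1
    ext q
    simp only [Finset.mem_biUnion, Option.mem_toFinset, Finset.mem_image]
    constructor
    · rintro ⟨p, hp, hq⟩
      rw [h p hp] at hq
      simp at hq
      exact ⟨p, hp, hq⟩
    · rintro ⟨p, hp, rfl⟩
      exact ⟨p, hp, by rw [h p hp]; rfl⟩
  · intro q hq; rw [h q hq]; rfl

lemma stepSet_insert {S T : Finset Q} {x : A} {p q : Q}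
    (h : stepSet δ S x = some T) (hq : δ p x = some q) :
    stepSet δ (insert p S) x = some (insert q T) := by
  obtain ⟨h1, rfl⟩ := stepSet_eq_some h
  unfold stepSet
  rw [if_pos]
  · rw [Finset.biUnion_insert, hq]
    rw [Option.toFinset_some, ← Finset.insert_eq]
  · intro r hr
    rcases Finset.mem_insert.mp hr with rfl | hr
    · rw [hq]; rfl
    · exact h1 r hr


lemma card_stepSet_le {S T : Finset Q} {x : A} (h : stepSet δ S x = some T) :
    T.card ≤ S.card := by
  obtain ⟨h1, rfl⟩ := stepSet_eq_some h
  refine le_trans (Finset.card_biUnion_le) ?_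
  calc ∑ q ∈ S, ((δ q x).toFinset).card ≤ ∑ q ∈ S, 1 := by
        refine Finset.sum_le_sum fun q hq => ?_
        cases δ q x <;> simp [Option.toFinset]
    _ = S.card := by simp

lemma card_runSet_le {S T : Finset Q} {w : List A} (h : runSet δ S w = some T) :
    T.card ≤ S.card := by
  induction w generalizing S with
  | nil => simp [runSet_nil] at h; exact h ▸ le_rfl
  | cons x xs ih =>
      rw [runSet_cons] at h
      cases hs : stepSet δ S x with
      | none => rw [hs] at h; simp at h
      | some S1 =>
          rw [hs] at h; simp at h
          exact le_trans (ih h) (card_stepSet_le hs)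

end basics

section delta
variable {d k : ℕ} {γ : ℕ → ℕ → Option ℕ}

lemma δAB_guard {p : ℕ × ℕ} {x : LB} {q : ℕ × ℕ} (h : δAB d k γ p x = some q) :
    1 ≤ p.1 ∧ p.1 ≤ k ∧ p.2 < d := by
  by_contra hc
  unfold δAB at h
  rw [if_pos hc] at h
  exact absurd h (by simp)

lemma δAB_a_eq {p : ℕ × ℕ} (hp : 1 ≤ p.1 ∧ p.1 ≤ k ∧ p.2 < d) :
    δAB d k γ p LB.a = some (p.1, 0) := by
  unfold δAB
  rw [if_neg (by simpa using hp)]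

lemma δAB_b_self {i j l : ℕ} (hl : 1 ≤ l ∧ l ≤ k) (hi : i = l) (hj : j + 1 < d) :
    δAB d k γ (i, j) (LB.b l) = some (i, j + 1) := by
  subst hi
  unfold δAB
  rw [if_neg (by simp; omega)]
  simp [hl, hj]

lemma δAB_b_lt {p : ℕ × ℕ} {l : ℕ} (hp : 1 ≤ p.1 ∧ p.1 ≤ k ∧ p.2 < d)
    (hl : 1 ≤ l) (hlt : l < p.1) : δAB d k γ p (LB.b l) = some p := by
  unfold δAB
  rw [if_neg (by simpa using hp)]
  have h1 : ¬(p.1 = l) := by omega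
  have h2 : l ≤ k := by omega
  simp [hl, h2, h1, hlt]

lemma δAB_b_gt {p : ℕ × ℕ} {l : ℕ} (hp : 1 ≤ p.1 ∧ p.1 ≤ k ∧ p.2 < d)
    (hl : l ≤ k) (hlt : p.1 < l) (hj : p.2 = d - 1) :
    δAB d k γ p (LB.b l) = some (p.1, 0) := by
  unfold δAB
  rw [if_neg (by simpa using hp)]
  have h0 : 1 ≤ l := by omega
  have h1 : ¬(p.1 = l) := by omega
  have h2 : ¬(l < p.1) := by omega
  simp [h0, hl, h1, h2, hj]

lemma δAB_a_inv {p q : ℕ × ℕ} (h : δAB d k γ p LB.a = some q) : q = (p.1, 0) := by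
  have hg := δAB_guard h
  rw [δAB_a_eq hg] at h
  exact (Option.some_inj.mp h).symm

lemma δAB_b_inv {p q : ℕ × ℕ} {l : ℕ} (h : δAB d k γ p (LB.b l) = some q) :
    q.1 = p.1 ∧ 1 ≤ l ∧ l ≤ k ∧
      ((p.1 = l ∧ q.2 = p.2 + 1 ∧ p.2 + 1 < d) ∨ (l < p.1 ∧ q = p) ∨
        (p.1 < l ∧ p.2 = d - 1 ∧ q.2 = 0)) := by
  have hg := δAB_guard h
  unfold δAB at h
  rw [if_neg (by simpa using hg)] at h
  simp only at h
  split_ifs at h with h1 h2 h3 h4 h5 <;>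
    first
      | (cases h; done)
      | (injection h with h'; subst h'; (try push_neg at *); simp_all <;> omega)

lemma δAB_c_inv {p q : ℕ × ℕ} {l : ℕ} (h : δAB d k γ p (LB.c l) = some q) :
    p.2 = d - 1 ∧ q.2 = 0 ∧ γ p.1 l = some q.1 := by
  have hg := δAB_guard h
  unfold δAB at h
  rw [if_neg (by simpa using hg)] at h
  simp only at h
  split_ifs at h with h1
  · cases hγ : γ p.1 l with
    | none => rw [hγ] at h; exact absurd h (by simp)
    | some j =>
        rw [hγ] at h
        simp at h
        subst h
        exact ⟨h1, rfl, by simpa using hγ⟩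

end delta

/-- The base-`d` value of a set of automaton states. -/
def mval (d : ℕ) (S : Finset (ℕ × ℕ)) : ℕ :=
  ∑ p ∈ S, p.2 * d ^ (((S.image Prod.fst).filter (· < p.1)).card)

lemma sumR (d : ℕ) (hd : 1 ≤ d) (J : Finset ℕ) :
    ∑ i ∈ J, (d - 1) * d ^ ((J.filter (· < i)).card) = d ^ J.card - 1 := by
  induction J using Finset.strongInduction with
  | _ J ih =>
    rcases J.eq_empty_or_nonempty with rfl | hne
    · simp
    · have hM : J.max' hne ∈ J := J.max'_mem hne
      set M := J.max' hne with hMdef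
      have hfil : J.filter (· < M) = J.erase M := by
        ext j
        simp only [Finset.mem_filter, Finset.mem_erase]
        constructor
        · rintro ⟨hj, hlt⟩; exact ⟨by omega, hj⟩
        · rintro ⟨hj, hjJ⟩
          have := J.le_max' j hjJ
          exact ⟨hjJ, by omega⟩
      have hsub : J.erase M ⊂ J := Finset.erase_ssubset hM
      have hcongr : ∀ i ∈ J.erase M,
          (d - 1) * d ^ ((J.filter (· < i)).card)
            = (d - 1) * d ^ (((J.erase M).filter (· < i)).card) := by
        intro i hi
        have hiJ := Finset.mem_of_mem_erase hi
        have hile := J.le_max' i hiJ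
        have : J.filter (· < i) = (J.erase M).filter (· < i) := by
          ext j
          simp only [Finset.mem_filter, Finset.mem_erase]
          constructor
          · rintro ⟨hj, hlt⟩
            refine ⟨⟨?_, hj⟩, hlt⟩
            intro hjM; subst hjM
            have hiM : i ≠ M := (Finset.mem_erase.mp hi).1
            omega
          · rintro ⟨⟨_, hj⟩, hlt⟩; exact ⟨hj, hlt⟩
        rw [this]
      have hsum : ∑ i ∈ J, (d - 1) * d ^ ((J.filter (· < i)).card)
          = (∑ i ∈ J.erase M, (d - 1) * d ^ (((J.erase M).filter (· < i)).card))
            + (d - 1) * d ^ ((J.erase M).card) := by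
        rw [← Finset.sum_erase_add J _ hM, hfil]
        congr 1
        exact Finset.sum_congr rfl hcongr
      rw [hsum, ih _ hsub]
      have hc : J.card = (J.erase M).card + 1 := by
        rw [Finset.card_erase_of_mem hM]
        have : 1 ≤ J.card := Finset.card_pos.mpr hne
        omega
      rw [hc]
      have h1 : 1 ≤ d ^ (J.erase M).card := Nat.one_le_pow _ _ (by omega)
      have h2 : d ^ ((J.erase M).card + 1)
          = (d - 1) * d ^ (J.erase M).card + d ^ (J.erase M).card := by
        rw [pow_succ]
        cases d with
        | zero => omega
        | succ d' => simp [Nat.succ_sub_one]; ring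
      omega

lemma mval_image_const (d v : ℕ) (I : Finset ℕ) :
    mval d (I.image fun i => (i, v))
      = ∑ i ∈ I, v * d ^ ((I.filter (· < i)).card) := by
  unfold mval
  have hJ : ((I.image fun i => (i, v)).image Prod.fst) = I := by
    rw [Finset.image_image]
    exact Finset.image_id
  rw [hJ]
  rw [Finset.sum_image (by intro x _ y _ h; exact (Prod.mk.injEq _ _ _ _).mp h |>.1)]

section step
variable {d k : ℕ} {γ : ℕ → ℕ → Option ℕ}

lemma step_mval (hd : 1 < d) {S T : Finset (ℕ × ℕ)} {x : LB}
    (h : stepSet (δAB d k γ) S x = some T)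
    (hinj : Set.InjOn Prod.fst (S : Set (ℕ × ℕ))) :
    mval d T ≤ mval d S + 1 ∧ Set.InjOn Prod.fst (T : Set (ℕ × ℕ)) := by
  have h1 : ∀ q ∈ S, (δAB d k γ q x).isSome := (stepSet_eq_some h).1
  cases x with
  | a =>
      have hT0 : ∀ q ∈ T, q.2 = 0 := by
        intro q hq
        obtain ⟨p, hp, hpq⟩ := (mem_of_stepSet h).mp hq
        rw [δAB_a_inv hpq]
      constructor
      · have : mval d T = 0 := Finset.sum_eq_zero fun q hq => by rw [hT0 q hq]; ring
        omega
      · intro q hq q' hq' hfst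
        exact Prod.ext hfst (by rw [hT0 q hq, hT0 q' hq'])
  | c l =>
      have hT0 : ∀ q ∈ T, q.2 = 0 := by
        intro q hq
        obtain ⟨p, hp, hpq⟩ := (mem_of_stepSet h).mp hq
        exact (δAB_c_inv hpq).2.1
      constructor
      · have : mval d T = 0 := Finset.sum_eq_zero fun q hq => by rw [hT0 q hq]; ring
        omega
      · intro q hq q' hq' hfst
        exact Prod.ext hfst (by rw [hT0 q hq, hT0 q' hq'])
  | b l =>
      set g : ℕ × ℕ → ℕ × ℕ :=
        fun p => if p.1 = l then (p.1, p.2 + 1) else if l < p.1 then p else (p.1, 0)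
        with hgdef
      have hgfst : ∀ p : ℕ × ℕ, (g p).1 = p.1 := by
        intro p; (simp only [hgdef]; beta_reduce); split_ifs <;> rfl
      have hg : ∀ p ∈ S, δAB d k γ p (LB.b l) = some (g p) := by
        intro p hp
        obtain ⟨q, hq⟩ := Option.isSome_iff_exists.mp (h1 p hp)
        obtain ⟨hq1, hl1, hl2, hcases⟩ := δAB_b_inv hq
        rw [hq]
        congr 1
        rcases hcases with ⟨he, hq2, _⟩ | ⟨hlt, rfl⟩ | ⟨hlt, _, hq2⟩
        · (simp only [hgdef]; beta_reduce); rw [if_pos he]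
          exact Prod.ext hq1 hq2
        · (simp only [hgdef]; beta_reduce)
          rw [if_neg (by omega), if_pos hlt]
        · (simp only [hgdef]; beta_reduce)
          rw [if_neg (by omega), if_neg (by omega)]
          exact Prod.ext hq1 hq2
      have hT : T = S.image g := by
        have h2 := stepSet_image hg
        rw [h] at h2
        exact (Option.some_inj.mp h2)
      have hlow : ∀ p ∈ S, p.1 < l → p.2 = d - 1 := by
        intro p hp hlt
        obtain ⟨q, hq⟩ := Option.isSome_iff_exists.mp (h1 p hp)
        obtain ⟨_, _, _, hcases⟩ := δAB_b_inv hq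
        rcases hcases with ⟨he, _, _⟩ | ⟨hlt', _⟩ | ⟨_, h2, _⟩ <;> first | omega | exact h2
      have hJT : T.image Prod.fst = S.image Prod.fst := by
        rw [hT, Finset.image_image]
        exact Finset.image_congr fun p _ => hgfst p
      have hinjT : Set.InjOn Prod.fst (T : Set (ℕ × ℕ)) := by
        intro q hq q' hq' hfst
        rw [hT] at hq hq'
        simp only [Finset.coe_image, Set.mem_image, Finset.mem_coe] at hq hq'
        obtain ⟨p, hp, rfl⟩ := hq
        obtain ⟨p', hp', rfl⟩ := hq'
        rw [hgfst, hgfst] at hfst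
        rw [hinj hp hp' hfst]
      refine ⟨?_, hinjT⟩
      set J := S.image Prod.fst with hJdef
      have ginj : ∀ p ∈ S, ∀ p' ∈ S, g p = g p' → p = p' := by
        intro p hp p' hp' he
        exact hinj hp hp' (by rw [← hgfst, he, hgfst])
      have hmT : mval d T
          = ∑ p ∈ S, (g p).2 * d ^ ((J.filter (· < p.1)).card) := by
        unfold mval
        rw [hJT, hT, Finset.sum_image ginj]
        exact Finset.sum_congr rfl fun p _ => by rw [hgfst]
      have hmS : mval d S
          = ∑ p ∈ S, p.2 * d ^ ((J.filter (· < p.1)).card) := rfl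
      by_cases hl : l ∈ J
      · -- increment case
        obtain ⟨p₀, hp₀, hp₀l⟩ := Finset.mem_image.mp hl
        have key : ∀ p ∈ S,
            (g p).2 * d ^ ((J.filter (· < p.1)).card)
              + (if p.1 < l then (d - 1) * d ^ ((J.filter (· < p.1)).card) else 0)
            = p.2 * d ^ ((J.filter (· < p.1)).card)
              + (if p.1 = l then d ^ ((J.filter (· < l)).card) else 0) := by
          intro p hp
          (simp only [hgdef]; beta_reduce)
          split_ifs with e1 e2 e3 e4 e5 e6 e7 <;>
            first
              | (exfalso; omega)
              | rfl
              | (simp only; rw [e1]; ring)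
              | (simp only; rw [hlow p hp (by omega)]; ring)
              | (simp only; ring)
        have hsumkey := Finset.sum_congr rfl key
        rw [Finset.sum_add_distrib, Finset.sum_add_distrib] at hsumkey
        have hone : (∑ p ∈ S, if p.1 = l then d ^ ((J.filter (· < l)).card) else 0)
            = d ^ ((J.filter (· < l)).card) := by
          rw [← Finset.sum_filter]
          have hsingle : S.filter (fun p => p.1 = l) = {p₀} := by
            ext q
            simp only [Finset.mem_filter, Finset.mem_singleton]
            constructor
            · rintro ⟨hq, hql⟩
              exact hinj hq hp₀ (by rw [hql, hp₀l])
            · rintro rfl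
              exact ⟨hp₀, hp₀l⟩
          rw [hsingle, Finset.sum_singleton]
        have hlowsum : (∑ p ∈ S, if p.1 < l
              then (d - 1) * d ^ ((J.filter (· < p.1)).card) else 0)
            = d ^ ((J.filter (· < l)).card) - 1 := by
          rw [← Finset.sum_filter]
          have hJ' : (S.filter (fun p => p.1 < l)).image Prod.fst
              = J.filter (· < l) := by
            ext i
            simp only [Finset.mem_image, Finset.mem_filter, hJdef]
            constructor
            · rintro ⟨p, ⟨hp, hpl⟩, rfl⟩
              exact ⟨⟨p, hp, rfl⟩, hpl⟩
            · rintro ⟨⟨p, hp, rfl⟩, hpl⟩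
              exact ⟨p, ⟨hp, hpl⟩, rfl⟩
          have hinj' : ∀ p ∈ S.filter (fun p => p.1 < l),
              ∀ q ∈ S.filter (fun p => p.1 < l), p.1 = q.1 → p = q := by
            intro p hp q hq
            exact hinj (Finset.mem_of_mem_filter p hp) (Finset.mem_of_mem_filter q hq)
          have h2 : ∑ p ∈ S.filter (fun p => p.1 < l),
                (d - 1) * d ^ ((J.filter (· < p.1)).card)
              = ∑ i ∈ J.filter (· < l), (d - 1) * d ^ ((J.filter (· < i)).card) := by
            rw [← hJ', Finset.sum_image hinj']
          rw [h2]
          have h3 : ∀ i ∈ J.filter (· < l),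
              (d - 1) * d ^ ((J.filter (· < i)).card)
                = (d - 1) * d ^ (((J.filter (· < l)).filter (· < i)).card) := by
            intro i hi
            have hil : i < l := (Finset.mem_filter.mp hi).2
            have hff : J.filter (· < i) = (J.filter (· < l)).filter (· < i) := by
              ext j
              simp only [Finset.mem_filter]
              constructor
              · rintro ⟨hj, hji⟩; exact ⟨⟨hj, by omega⟩, hji⟩
              · rintro ⟨⟨hj, _⟩, hji⟩; exact ⟨hj, hji⟩
            rw [hff]
          rw [Finset.sum_congr rfl h3, sumR d (by omega)]
        rw [hone, hlowsum, ← hmT, ← hmS] at hsumkey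
        have hpow : 1 ≤ d ^ ((J.filter (· < l)).card) := Nat.one_le_pow _ _ (by omega)
        omega
      · -- no-increment case
        have hle : mval d T ≤ mval d S := by
          rw [hmT, hmS]
          refine Finset.sum_le_sum fun p hp => ?_
          have hpl : p.1 ≠ l := by
            intro he
            exact hl (by rw [hJdef]; exact Finset.mem_image.mpr ⟨p, hp, he⟩)
          (simp only [hgdef]; beta_reduce)
          rw [if_neg hpl]
          split_ifs with e2
          · exact le_rfl
          · simp
        omega

end step

section run
variable {d k : ℕ} {γ : ℕ → ℕ → Option ℕ}

lemma run_mval (hd : 1 < d) (w : List LB) :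
    ∀ (S F : Finset (ℕ × ℕ)), runSet (δAB d k γ) S w = some F →
      Set.InjOn Prod.fst (S : Set (ℕ × ℕ)) → mval d F ≤ mval d S + w.length := by
  induction w with
  | nil =>
      intro S F h hinj
      rw [runSet_nil] at h
      rw [Option.some_inj.mp h]
      simp
  | cons x xs ih =>
      intro S F h hinj
      rw [runSet_cons] at h
      cases hs : stepSet (δAB d k γ) S x with
      | none => rw [hs] at h; exact absurd h (by simp)
      | some S1 =>
          rw [hs] at h
          simp only [Option.bind_some] at h
          obtain ⟨hm, hinj1⟩ := step_mval hd hs hinj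
          have := ih S1 F h hinj1
          simp only [List.length_cons]
          omega
end run

section upper
variable {d k : ℕ} {γ : ℕ → ℕ → Option ℕ}

lemma stepSet_id_b (hd : 1 < d) {i : ℕ} (hi : 1 ≤ i)
    {S' : Finset (ℕ × ℕ)} (hS' : ∀ p ∈ S', i < p.1 ∧ p.1 ≤ k ∧ p.2 < d) :
    stepSet (δAB d k γ) S' (LB.b i) = some S' := by
  have := stepSet_image (δ := δAB d k γ) (S := S') (x := LB.b i) (g := id)
    (fun p hp => by
      obtain ⟨h1, h2, h3⟩ := hS' p hp
      exact δAB_b_lt ⟨by omega, h2, h3⟩ hi h1)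
  rwa [Finset.image_id] at this

lemma runSet_refill (hd : 1 < d) {i : ℕ} (hi : 1 ≤ i ∧ i ≤ k)
    {S' : Finset (ℕ × ℕ)} (hS' : ∀ p ∈ S', i < p.1 ∧ p.1 ≤ k ∧ p.2 < d) :
    ∀ n, n ≤ d - 1 →
      runSet (δAB d k γ) (insert (i, d - 1 - n) S') (List.replicate n (LB.b i))
        = some (insert (i, d - 1) S') := by
  intro n
  induction n with
  | zero => intro _; simp [runSet_nil]
  | succ n ihn =>
      intro hn
      have hstep : stepSet (δAB d k γ) (insert (i, d - 1 - (n + 1)) S') (LB.b i)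
          = some (insert (i, d - 1 - n) S') := by
        have hδ : δAB d k γ (i, d - 1 - (n + 1)) (LB.b i)
            = some (i, d - 1 - n) := by
          have h1 : d - 1 - (n + 1) + 1 < d := by omega
          have h2 : d - 1 - (n + 1) + 1 = d - 1 - n := by omega
          rw [δAB_b_self hi rfl h1, h2]
        exact stepSet_insert (stepSet_id_b hd hi.1 hS') hδ
      rw [List.replicate_succ, runSet_cons, hstep, Option.bind_some]
      exact ihn (by omega)

lemma runSet_fill (hd : 1 < d) {i : ℕ} (hi : 1 ≤ i ∧ i ≤ k)
    {S' : Finset (ℕ × ℕ)} (hS' : ∀ p ∈ S', i < p.1 ∧ p.1 ≤ k ∧ p.2 < d) :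
    runSet (δAB d k γ) (insert (i, 0) S') (List.replicate (d - 1) (LB.b i))
      = some (insert (i, d - 1) S') := by
  have := runSet_refill (γ := γ) hd hi hS' (d - 1) le_rfl
  rwa [Nat.sub_self] at this

lemma runSet_interleave (hd : 1 < d) {i : ℕ} (hi : 1 ≤ i ∧ i ≤ k) (w : List LB)
    (hw : ∀ x ∈ w, ∃ l, i < l ∧ l ≤ k ∧ x = LB.b l) :
    ∀ S' T' : Finset (ℕ × ℕ), runSet (δAB d k γ) S' w = some T' →
      (∀ p ∈ S', i < p.1 ∧ p.1 ≤ k ∧ p.2 < d) →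
      runSet (δAB d k γ) (insert (i, d - 1) S')
          (w.flatMap fun x => x :: List.replicate (d - 1) (LB.b i))
        = some (insert (i, d - 1) T') ∧ (∀ p ∈ T', i < p.1 ∧ p.1 ≤ k ∧ p.2 < d) := by
  induction w with
  | nil =>
      intro S' T' h hS'
      rw [runSet_nil] at h
      rw [Option.some_inj.mp h] at hS' ⊢
      exact ⟨rfl, hS'⟩
  | cons x xs ihx =>
      intro S' T' h hS'
      obtain ⟨l, hil, hlk, rfl⟩ := hw x List.mem_cons_self
      rw [runSet_cons] at h
      cases hs : stepSet (δAB d k γ) S' (LB.b l) with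
      | none => rw [hs] at h; exact absurd h (by simp)
      | some S1 =>
          rw [hs, Option.bind_some] at h
          have hS1 : ∀ p ∈ S1, i < p.1 ∧ p.1 ≤ k ∧ p.2 < d := by
            intro q hq
            obtain ⟨p, hp, hpq⟩ := (mem_of_stepSet hs).mp hq
            obtain ⟨hq1, _, _, hcases⟩ := δAB_b_inv hpq
            obtain ⟨hp1, hp2, hp3⟩ := hS' p hp
            refine ⟨by omega, by omega, ?_⟩
            rcases hcases with ⟨_, h2, h3⟩ | ⟨_, rfl⟩ | ⟨_, _, h2⟩ <;> omega
          have hδ : δAB d k γ (i, d - 1) (LB.b l) = some (i, 0) :=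
            δAB_b_gt (p := (i, d - 1)) ⟨hi.1, hi.2, by omega⟩ hlk hil rfl
          have hstep := stepSet_insert hs hδ
          have hfill := runSet_fill (γ := γ) hd hi hS1
          obtain ⟨hrest, hT'⟩ := ihx (fun y hy => hw y (List.mem_cons_of_mem _ hy))
            S1 T' h hS1
          refine ⟨?_, hT'⟩
          rw [List.flatMap_cons, List.cons_append, runSet_cons, hstep,
            Option.bind_some, runSet_append, hfill, Option.bind_some]
          exact hrest

lemma length_flatMap_const {α : Type*} (f : α → List α) (c : ℕ)
    (hf : ∀ x, (f x).length = c) : ∀ w : List α, (w.flatMap f).length = c * w.length := by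
  intro w
  induction w with
  | nil => simp
  | cons x xs ih =>
      rw [List.flatMap_cons, List.length_append, ih, hf, List.length_cons]
      ring

lemma exists_word (hd : 1 < d) (I : Finset ℕ) (hI : I ⊆ Finset.Icc 1 k) :
    ∃ w : List LB, w.length = d ^ I.card - 1 ∧ (∀ x ∈ w, ∃ l ∈ I, x = LB.b l) ∧
      runSet (δAB d k γ) (I.image fun i => (i, 0)) w
        = some (I.image fun i => (i, d - 1)) := by
  induction I using Finset.strongInduction with
  | _ I ih =>
    rcases I.eq_empty_or_nonempty with rfl | hne
    · exact ⟨[], by simp, by simp, by simp [runSet_nil]⟩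
    · have hmin : I.min' hne ∈ I := I.min'_mem hne
      set i := I.min' hne with hidef
      have hi : 1 ≤ i ∧ i ≤ k := by
        have := hI hmin
        rw [Finset.mem_Icc] at this
        exact this
      set I' := I.erase i with hI'def
      have hsub : I' ⊂ I := Finset.erase_ssubset hmin
      have hgt : ∀ l ∈ I', i < l := by
        intro l hl
        have h1 := I.min'_le l (Finset.mem_of_mem_erase hl)
        have h2 := (Finset.mem_erase.mp hl).1
        omega
      obtain ⟨w', hlen', hlet', hrun'⟩ := ih I' hsub (hsub.1.trans hI)
      have hS'inv : ∀ p ∈ I'.image (fun l => (l, 0)), i < p.1 ∧ p.1 ≤ k ∧ p.2 < d := by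
        intro p hp
        obtain ⟨l, hl, rfl⟩ := Finset.mem_image.mp hp
        have := hI (Finset.mem_of_mem_erase hl)
        rw [Finset.mem_Icc] at this
        exact ⟨hgt l hl, this.2, by omega⟩
      have hw' : ∀ x ∈ w', ∃ l, i < l ∧ l ≤ k ∧ x = LB.b l := by
        intro x hx
        obtain ⟨l, hl, rfl⟩ := hlet' x hx
        have := hI (Finset.mem_of_mem_erase hl)
        rw [Finset.mem_Icc] at this
        exact ⟨l, hgt l hl, this.2, rfl⟩
      obtain ⟨hrest, -⟩ := runSet_interleave (γ := γ) hd hi w' hw'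
        (I'.image fun l => (l, 0)) (I'.image fun l => (l, d - 1)) hrun' hS'inv
      have hfill := runSet_fill (γ := γ) hd hi hS'inv
      refine ⟨List.replicate (d - 1) (LB.b i)
          ++ w'.flatMap (fun x => x :: List.replicate (d - 1) (LB.b i)), ?_, ?_, ?_⟩
      · rw [List.length_append, List.length_replicate,
          length_flatMap_const _ d (fun x => by simp; omega), hlen']
        have hcard : I.card = I'.card + 1 := by
          rw [hI'def, Finset.card_erase_of_mem hmin]
          have : 1 ≤ I.card := Finset.card_pos.mpr hne
          omega
        rw [hcard]
        obtain ⟨e, he⟩ : ∃ e, d ^ I'.card = e + 1 :=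
          ⟨d ^ I'.card - 1, by have := Nat.one_le_pow I'.card d (by omega); omega⟩
        rw [pow_succ, he]
        have h1 : (e + 1) * d = d * e + d := by ring
        have h2 : d * (e + 1 - 1) = d * e := by simp
        omega
      · intro x hx
        rcases List.mem_append.mp hx with hx | hx
        · rw [List.eq_of_mem_replicate hx]
          exact ⟨i, hmin, rfl⟩
        · obtain ⟨y, hy, hxy⟩ := List.mem_flatMap.mp hx
          rcases List.mem_cons.mp hxy with rfl | hxy
          · obtain ⟨l, hl, rfl⟩ := hlet' x hy
            exact ⟨l, Finset.mem_of_mem_erase hl, rfl⟩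
          · rw [List.eq_of_mem_replicate hxy]
            exact ⟨i, hmin, rfl⟩
      · have hins : I.image (fun l => (l, 0)) = insert (i, 0) (I'.image fun l => (l, 0)) := by
          conv_lhs => rw [← Finset.insert_erase hmin]
          rw [Finset.image_insert]
        have hins2 : I.image (fun l => (l, d - 1))
            = insert (i, d - 1) (I'.image fun l => (l, d - 1)) := by
          conv_lhs => rw [← Finset.insert_erase hmin]
          rw [Finset.image_insert]
        rw [hins, hins2, runSet_append, hfill, Option.bind_some]
        exact hrest

end upper


/-- Lemma 4: in the power automaton of `A_d(B)`, for any subset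
`I = {i_1,…,i_s} ⊆ {1,…,k}`, the shortest path from `{q_0^{i_1},…,q_0^{i_s}}` to
`{q_{d-1}^{i_1},…,q_{d-1}^{i_s}}` has length exactly `d^s − 1`. -/
theorem shortest_path_in_power_of_AdB (d k : ℕ) (hd : 1 < d)
    (γ : ℕ → ℕ → Option ℕ) (hγ : ∀ i l j, γ i l = some j → 1 ≤ j ∧ j ≤ k)
    (I : Finset ℕ) (hI : I ⊆ Finset.Icc 1 k) (hne : I.Nonempty) :
    (∃ w : List LB, w.length = d ^ I.card - 1 ∧
        runSet (δAB d k γ) (I.image fun i => (i, 0)) w =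
          some (I.image fun i => (i, d - 1))) ∧
    (∀ w : List LB,
        runSet (δAB d k γ) (I.image fun i => (i, 0)) w =
          some (I.image fun i => (i, d - 1)) →
        d ^ I.card - 1 ≤ w.length) := by
  constructor
  · obtain ⟨w, hlen, -, hrun⟩ := exists_word (γ := γ) hd I hI
    exact ⟨w, hlen, hrun⟩
  · intro w hrun
    have hinj : Set.InjOn Prod.fst ((I.image fun i => (i, 0)) : Set (ℕ × ℕ)) := by
      intro p hp q hq hfst
      simp only [Finset.coe_image, Set.mem_image, Finset.mem_coe] at hp hq
      obtain ⟨a, -, rfl⟩ := hp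
      obtain ⟨b, -, rfl⟩ := hq
      simp only at hfst
      rw [hfst]
    have hm := run_mval hd w _ _ hrun hinj
    have h0 : mval d (I.image fun i => (i, 0)) = 0 := by
      rw [mval_image_const]
      simp
    have hfin : mval d (I.image fun i => (i, d - 1)) = d ^ I.card - 1 := by
      rw [mval_image_const]
      exact sumR d (by omega) I
    rw [h0, hfin] at hm
    omega
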